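/- Let ℭ be a C*-algebra and suppose Φ : {z ∈ ℂ : Im z ≠ 0} → ℭ is a map satisfying the resolvent identity Φ(z) − Φ(z') = (z − z') Φ(z) Φ(z') for all non-real z, z', the symmetry Φ(z)* = Φ(z̄), and the bound ‖Φ(z)‖ ≤ 1/|Im z|. Then there exists a unique C*-algebra morphism Φ̃ : C₀(ℝ) → ℭ such that Φ̃(r_z) = Φ(z) where r_z(λ) := (λ − z)^{−1}. -/

import Mathlib

open scoped ZeroAtInfty

open scoped ContinuousMapZero
open Filter

noncomputable section


/-- The circle `{s : ℂ | Im s = |s|²}`, i.e. the image of `ℝ ∪ {∞}` under `t ↦ (t - i)⁻¹`. -/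
def affilK : Set ℂ := Metric.sphere (Complex.I / 2) (1 / 2)

lemma affilK_zero_mem : (0 : ℂ) ∈ affilK := by
  simp [affilK, Complex.dist_eq, norm_div, Complex.norm_I, Complex.norm_two]

instance : Zero affilK := ⟨⟨0, affilK_zero_mem⟩⟩

lemma affilK_coe_zero : ((0 : affilK) : ℂ) = 0 := rfl

instance : CompactSpace affilK := isCompact_iff_compactSpace.mp (isCompact_sphere _ _)

lemma affilK_center_re : (Complex.I / 2 : ℂ).re = 0 := by simp
lemma affilK_center_im : (Complex.I / 2 : ℂ).im = 1 / 2 := by simp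

lemma mem_affilK_iff {s : ℂ} : s ∈ affilK ↔ s.im = Complex.normSq s := by
  have hre : (s - Complex.I / 2).re = s.re := by simp
  have him : (s - Complex.I / 2).im = s.im - 1 / 2 := by
    simp [Complex.sub_im, affilK_center_im]
  rw [affilK, Metric.mem_sphere, Complex.dist_eq]
  constructor
  · intro h
    have h2 : Complex.normSq (s - Complex.I / 2) = (1 / 2 : ℝ) ^ 2 := by
      rw [← Complex.sq_norm, h]
    rw [Complex.normSq_apply, hre, him] at h2
    rw [Complex.normSq_apply]
    nlinarith
  · intro h
    have h2 : Complex.normSq (s - Complex.I / 2) = (1 / 2 : ℝ) ^ 2 := by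
      rw [Complex.normSq_apply, hre, him]
      rw [Complex.normSq_apply] at h
      nlinarith
    rw [← Complex.sq_norm] at h2
    have := norm_nonneg (s - Complex.I / 2)
    nlinarith

lemma affil_sub_I_ne (t : ℝ) : ((t : ℂ) - Complex.I) ≠ 0 := by
  intro h
  have := congrArg Complex.im h
  simp at this

lemma affil_inv_mem (t : ℝ) : ((t : ℂ) - Complex.I)⁻¹ ∈ affilK := by
  rw [mem_affilK_iff, Complex.inv_im, map_inv₀ Complex.normSq]
  have h1 : ((t : ℂ) - Complex.I).im = -1 := by simp
  rw [h1]
  field_simp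

lemma affil_inv_ne (t : ℝ) : ((t : ℂ) - Complex.I)⁻¹ ≠ 0 :=
  inv_ne_zero (affil_sub_I_ne t)

lemma affil_param {s : ℂ} (hs : s ∈ affilK) (h0 : s ≠ 0) :
    s = (((s⁻¹.re : ℝ) : ℂ) - Complex.I)⁻¹ := by
  have hns : Complex.normSq s ≠ 0 := by
    simpa [Complex.normSq_eq_zero] using h0
  have him : (s⁻¹).im = -1 := by
    rw [Complex.inv_im, mem_affilK_iff.mp hs]
    field_simp
  have : s⁻¹ = ((s⁻¹.re : ℝ) : ℂ) - Complex.I := by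
    apply Complex.ext <;> simp [him]
  conv_lhs => rw [← inv_inv s, this]

/-- Extension of `g : C₀(ℝ, ℂ)` to the circle `affilK`. -/
def affilExt (g : C₀(ℝ, ℂ)) : ℂ → ℂ := fun s => if s = 0 then 0 else g ((s⁻¹).re)

@[simp] lemma affilExt_zero (g : C₀(ℝ, ℂ)) : affilExt g 0 = 0 := if_pos rfl

lemma affilExt_abs_le {s : ℂ} (hs : s ∈ affilK) (h0 : s ≠ 0) :
    ‖s‖⁻¹ - 1 ≤ |((s⁻¹).re)| := by
  have hns : Complex.normSq s ≠ 0 := by simpa [Complex.normSq_eq_zero] using h0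
  have him : (s⁻¹).im = -1 := by
    rw [Complex.inv_im, mem_affilK_iff.mp hs]; field_simp
  have h1 : ‖s⁻¹‖ ≤ |(s⁻¹).re| + |(s⁻¹).im| :=
    Complex.norm_le_abs_re_add_abs_im _
  rw [him, norm_inv] at h1
  simp only [abs_neg, abs_one] at h1
  linarith

lemma affilExt_contOn (g : C₀(ℝ, ℂ)) : ContinuousOn (affilExt g) affilK := by
  intro s hs
  by_cases h0 : s = 0
  · subst h0
    rw [ContinuousWithinAt, affilExt_zero]
    have hsub : affilK ⊆ (affilK \ {0}) ∪ {0} := by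
      intro x hx
      by_cases hx0 : x = 0 <;> simp [hx, hx0]
    refine Tendsto.mono_left ?_ (nhdsWithin_mono 0 hsub)
    rw [nhdsWithin_union]
    refine Tendsto.sup ?_ ?_
    · -- along `affilK \ {0}`
      have habs : Tendsto (fun s : ℂ => ‖s‖) (nhdsWithin 0 (affilK \ {0}))
          (nhdsWithin 0 (Set.Ioi (0:ℝ))) := by
        apply tendsto_nhdsWithin_of_tendsto_nhds_of_eventually_within
        · exact (continuous_norm.tendsto' 0 0 norm_zero).mono_left nhdsWithin_le_nhds
        · filter_upwards [self_mem_nhdsWithin] with x hx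
          exact norm_pos_iff.mpr hx.2
      have h2 : Tendsto (fun s : ℂ => ‖s‖⁻¹ - 1)
          (nhdsWithin 0 (affilK \ {0})) atTop := by
        have := tendsto_inv_nhdsGT_zero.comp habs
        exact tendsto_atTop_add_const_right _ (-1) this |>.congr (by intro x; simp [sub_eq_add_neg])
      have h1 : Tendsto (fun s : ℂ => (s⁻¹).re) (nhdsWithin 0 (affilK \ {0})) (cocompact ℝ) := by
        apply tendsto_cocompact_of_tendsto_dist_comp_atTop (0 : ℝ)
        apply tendsto_atTop_mono' _ ?_ h2
        filter_upwards [self_mem_nhdsWithin] with x hx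
        rw [Real.dist_0_eq_abs]
        exact affilExt_abs_le hx.1 hx.2
      have := (ZeroAtInftyContinuousMap.zero_at_infty' g).comp h1
      refine Tendsto.congr' ?_ this
      filter_upwards [self_mem_nhdsWithin] with x hx
      have hx0 : x ≠ 0 := fun h => hx.2 (by simp [h])
      simp [affilExt, hx0]
    · rw [nhdsWithin_singleton, tendsto_pure_left]
      intro U hU
      simpa [affilExt] using mem_of_mem_nhds hU
  · have hcont : ContinuousAt (fun s : ℂ => (g ((s⁻¹).re) : ℂ)) s := by
      apply (map_continuous g).continuousAt.comp
      exact Complex.continuous_re.continuousAt.comp (continuousAt_inv₀ h0)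
    apply hcont.continuousWithinAt.congr_of_eventuallyEq
    · apply eventually_nhdsWithin_of_eventually_nhds
      filter_upwards [(isOpen_compl_singleton (x := (0:ℂ))).mem_nhds h0] with x hx
      have hx0 : x ≠ 0 := fun h => hx (by simp [h])
      simp [affilExt, hx0]
    · simp [affilExt, h0]

/-- The pullback morphism `C(affilK, ℂ)₀ → C₀(ℝ, ℂ)` along `t ↦ (t - i)⁻¹`. -/
def affilTheta : C(affilK, ℂ)₀ →⋆ₙₐ[ℂ] C₀(ℝ, ℂ) where
  toFun f :=
    { toFun := fun t => f ⟨((t : ℂ) - Complex.I)⁻¹, affil_inv_mem t⟩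
      continuous_toFun := (map_continuous f).comp <| Continuous.subtype_mk
        (Continuous.inv₀ (by continuity) affil_sub_I_ne) _
      zero_at_infty' := by
        have key : Tendsto (fun t : ℝ => (⟨((t : ℂ) - Complex.I)⁻¹, affil_inv_mem t⟩ : affilK))
            (cocompact ℝ) (nhds 0) := by
          rw [tendsto_subtype_rng]
          show Tendsto (fun t : ℝ => ((t : ℂ) - Complex.I)⁻¹) (cocompact ℝ) (nhds ((0 : affilK) : ℂ))
          have : ((0 : affilK) : ℂ) = 0 := rfl
          rw [this]
          refine squeeze_zero_norm' ?_ (tendsto_inv_atTop_zero.comp tendsto_norm_cocompact_atTop)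
          · filter_upwards [tendsto_norm_cocompact_atTop.eventually_ge_atTop 1] with t ht
            rw [norm_inv]
            apply inv_anti₀ (by linarith)
            simpa using Complex.abs_re_le_norm ((t : ℂ) - Complex.I)
        have h0f : f 0 = 0 := map_zero f
        have := ((map_continuous f).tendsto (0 : affilK)).comp key
        simpa [h0f, Function.comp_def] using this }
  map_smul' c f := by ext t; simp
  map_zero' := by ext t; simp
  map_add' f₁ f₂ := by ext t; simp
  map_mul' f₁ f₂ := by ext t; simp
  map_star' f := by ext t; simp

lemma affilTheta_apply (f : C(affilK, ℂ)₀) (t : ℝ) :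
    affilTheta f t = f ⟨((t : ℂ) - Complex.I)⁻¹, affil_inv_mem t⟩ := rfl

lemma affilTheta_surj (g : C₀(ℝ, ℂ)) :
    ∃ f : C(affilK, ℂ)₀, affilTheta f = g := by
  refine ⟨⟨⟨affilK.restrict (affilExt g), (affilExt_contOn g).restrict⟩, ?_⟩, ?_⟩
  · show affilExt g ((0 : affilK) : ℂ) = 0
    simp [affilK_coe_zero]
  · ext t
    show affilExt g (((t : ℂ) - Complex.I)⁻¹) = g t
    rw [affilExt, if_neg (affil_inv_ne t), inv_inv]
    norm_num


/-- abstract affiliation criterion: a resolvent-like family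
`Φ(z)`, `Im z ≠ 0`, in a C*-algebra `C` satisfying the resolvent identity, the symmetry
`Φ(z)* = Φ(z̄)` and `‖Φ(z)‖ ≤ 1/|Im z|` extends uniquely to a morphism
`C₀(ℝ) → C` sending `r_z = (· − z)⁻¹` to `Φ(z)`. -/
theorem affiliation_criterion {C : Type*} [NormedRing C] [StarRing C]
    [CStarRing C] [NormedAlgebra ℂ C] [CompleteSpace C] [StarModule ℂ C]
    (Φ : ℂ → C)
    (hres : ∀ z z' : ℂ, z.im ≠ 0 → z'.im ≠ 0 →
      Φ z - Φ z' = (z - z') • (Φ z * Φ z'))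
    (hstar : ∀ z : ℂ, z.im ≠ 0 → star (Φ z) = Φ (starRingEnd ℂ z))
    (hbound : ∀ z : ℂ, z.im ≠ 0 → ‖Φ z‖ ≤ 1 / |z.im|) :
    ∃! F : C₀(ℝ, ℂ) →⋆ₙₐ[ℂ] C,
      ∀ z : ℂ, z.im ≠ 0 → ∀ g : C₀(ℝ, ℂ),
        (∀ t : ℝ, g t = ((t : ℂ) - z)⁻¹) → F g = Φ z := by
  classical
  letI : CStarAlgebra C := {}
  letI : NonUnitalCStarAlgebra C₀(ℝ, ℂ) := {}
  letI : NonUnitalCStarAlgebra C(affilK, ℂ)₀ := {}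
  have hI : (Complex.I).im ≠ 0 := by simp
  have hnI : ((-Complex.I : ℂ)).im ≠ 0 := by simp
  set S : C := Φ Complex.I with hSdef
  have hstarS : star S = Φ (-Complex.I) := by
    have := hstar Complex.I hI
    rwa [Complex.conj_I] at this
  have hrelA : S - star S = (2 * Complex.I) • (S * star S) := by
    have h := hres Complex.I (-Complex.I) hI hnI
    rw [← hstarS] at h
    convert h using 2 <;> ring
  have hrelB : S - star S = (2 * Complex.I) • (star S * S) := by
    have h := hres (-Complex.I) Complex.I hnI hI
    rw [← hstarS] at h
    -- h : star S - S = (-I - I) • (star S * S)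
    have h2 : star S - S = (-(2 * Complex.I)) • (star S * S) := by
      convert h using 2 <;> ring
    rw [neg_smul] at h2
    have := congrArg Neg.neg h2
    rwa [neg_sub, neg_neg] at this
  have h2I : (2 * Complex.I : ℂ) ≠ 0 := by simp [Complex.I_ne_zero]
  have hcomm : S * star S = star S * S := by
    have h := hrelA.symm.trans hrelB
    have h' := congrArg (fun v : C => ((2 * Complex.I)⁻¹ : ℂ) • v) h
    simp only [smul_smul, inv_mul_cancel₀ h2I, one_smul] at h'
    exact h'
  have hnormal : IsStarNormal S := ⟨hcomm.symm⟩
  -- W := 2S - i is unitary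
  set W : C := (2 : ℂ) • S + (-Complex.I) • (1 : C) with hW
  have hstarW : star W = (2 : ℂ) • star S + Complex.I • (1 : C) := by
    rw [hW, star_add, star_smul, star_smul, star_one]
    congr 1
    · congr 1
      simp [Complex.star_def]
    · congr 1
      simp [Complex.star_def]
  have expand : ∀ (X Y : C) (c d : ℂ),
      ((2:ℂ) • X + c • (1:C)) * ((2:ℂ) • Y + d • (1:C))
        = (4:ℂ) • (X * Y) + (2*d) • X + (2*c) • Y + (c*d) • (1:C) := by
    intro X Y c d
    simp only [add_mul, mul_add, smul_mul_assoc, mul_smul_comm, smul_smul, mul_one, one_mul]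
    module
  have hneg4 : (-(2 * Complex.I)) * (2 * Complex.I) = (4:ℂ) := by
    rw [neg_mul, mul_mul_mul_comm, Complex.I_mul_I]
    norm_num
  have hrelB4 : (4:ℂ) • (star S * S) = (2 * Complex.I) • star S - (2 * Complex.I) • S := by
    have h := congrArg (fun v : C => (-(2 * Complex.I)) • v) hrelB
    simp only [smul_sub, smul_smul, hneg4, neg_smul] at h
    rw [← h]
    module
  have hrelA4 : (4:ℂ) • (S * star S) = (2 * Complex.I) • star S - (2 * Complex.I) • S := by
    have h := congrArg (fun v : C => (-(2 * Complex.I)) • v) hrelA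
    simp only [smul_sub, smul_smul, hneg4, neg_smul] at h
    rw [← h]
    module
  have hsWW : star W * W = 1 := by
    rw [hstarW, hW, expand, hrelB4,
      show Complex.I * (-Complex.I) = 1 by rw [mul_neg, Complex.I_mul_I, neg_neg]]
    module
  have hWsW : W * star W = 1 := by
    rw [hW, hstarW, expand, hrelA4,
      show (-Complex.I) * Complex.I = 1 by rw [neg_mul, Complex.I_mul_I, neg_neg]]
    module
  have hWmem : W ∈ unitary C := Unitary.mem_iff.mpr ⟨hsWW, hWsW⟩
  -- spectrum of S is contained in affilK
  have hspec : spectrum ℂ S ⊆ affilK := by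
    intro μ hμ
    have hμ' : 2 * μ - Complex.I ∈ spectrum ℂ W := by
      rw [spectrum.mem_iff] at hμ ⊢
      intro hcon
      apply hμ
      have heq : (algebraMap ℂ C) (2 * μ - Complex.I) - W
          = (2:ℂ) • ((algebraMap ℂ C) μ - S) := by
        simp only [Algebra.algebraMap_eq_smul_one, hW]
        module
      rw [heq] at hcon
      have hhalf : (algebraMap ℂ C) μ - S
          = (algebraMap ℂ C) (2⁻¹ : ℂ) * ((2:ℂ) • ((algebraMap ℂ C) μ - S)) := by
        rw [Algebra.smul_def, ← mul_assoc, ← map_mul]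
        norm_num
      rw [hhalf]
      exact ((isUnit_iff_ne_zero.mpr (by norm_num : (2⁻¹:ℂ) ≠ 0)).map _).mul hcon
    have habs : ‖2 * μ - Complex.I‖ = 1 := by
      have := Unitary.spectrum_subset_circle (𝕜 := ℂ) ⟨W, hWmem⟩ hμ'
      simpa [Complex.dist_eq] using this
    show μ ∈ Metric.sphere (Complex.I / 2) (1 / 2)
    rw [Metric.mem_sphere, Complex.dist_eq]
    have h2 : ‖2 * (μ - Complex.I / 2)‖ = 1 := by
      rw [show (2:ℂ) * (μ - Complex.I / 2) = 2 * μ - Complex.I by ring]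
      exact habs
    rw [norm_mul, Complex.norm_two] at h2
    linarith
  have hcont : ∀ g : C₀(ℝ, ℂ), ContinuousOn (affilExt g) (spectrum ℂ S) :=
    fun g => (affilExt_contOn g).mono hspec
  -- the morphism
  let F : C₀(ℝ, ℂ) →⋆ₙₐ[ℂ] C :=
  { toFun := fun g => cfc (affilExt g) S
    map_smul' := fun c g => by
      show cfc (affilExt (c • g)) S = c • cfc (affilExt g) S
      rw [show affilExt (c • g) = fun s => c • affilExt g s from
        funext fun s => by by_cases h : s = 0 <;> simp [affilExt, h]]
      exact cfc_smul c (affilExt g) S (hcont g)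
    map_zero' := by
      show cfc (affilExt (0 : C₀(ℝ, ℂ))) S = 0
      rw [show affilExt (0 : C₀(ℝ, ℂ)) = (0 : ℂ → ℂ) from
        funext fun s => by by_cases h : s = 0 <;> simp [affilExt, h]]
      exact cfc_zero ℂ S
    map_add' := fun g₁ g₂ => by
      show cfc (affilExt (g₁ + g₂)) S = cfc (affilExt g₁) S + cfc (affilExt g₂) S
      rw [show affilExt (g₁ + g₂) = fun s => affilExt g₁ s + affilExt g₂ s from
        funext fun s => by by_cases h : s = 0 <;> simp [affilExt, h]]
      exact cfc_add S (affilExt g₁) (affilExt g₂) (hcont g₁) (hcont g₂)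
    map_mul' := fun g₁ g₂ => by
      show cfc (affilExt (g₁ * g₂)) S = cfc (affilExt g₁) S * cfc (affilExt g₂) S
      rw [show affilExt (g₁ * g₂) = fun s => affilExt g₁ s * affilExt g₂ s from
        funext fun s => by by_cases h : s = 0 <;> simp [affilExt, h]]
      exact cfc_mul (affilExt g₁) (affilExt g₂) S (hcont g₁) (hcont g₂)
    map_star' := fun g => by
      show cfc (affilExt (star g)) S = star (cfc (affilExt g) S)
      rw [show affilExt (star g) = fun s => star (affilExt g s) from
        funext fun s => by by_cases h : s = 0 <;> simp [affilExt, h]]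
      exact cfc_star (affilExt g) S }
  have hFapply : ∀ g, F g = cfc (affilExt g) S := fun g => rfl
  have hP : ∀ z : ℂ, z.im ≠ 0 → ∀ g : C₀(ℝ, ℂ),
      (∀ t : ℝ, g t = ((t : ℂ) - z)⁻¹) → F g = Φ z := by
    intro z hz g hg
    rw [hFapply]
    have h1 : Φ z + (Complex.I - z) • (S * Φ z) = S := by
      have h := hres Complex.I z hI hz
      rw [← h]
      abel
    have h2 : Φ z + (Complex.I - z) • (Φ z * S) = S := by
      have h := hres z Complex.I hz hI
      have h' : S - Φ z = (Complex.I - z) • (Φ z * S) := by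
        have := congrArg Neg.neg h
        rw [neg_sub, ← neg_smul, neg_sub] at this
        exact this
      rw [← h']
      abel
    have hA1 : cfc (affilExt g) S + (Complex.I - z) • (S * cfc (affilExt g) S) = S := by
      have hmulcont : ContinuousOn (fun s : ℂ => s * affilExt g s) (spectrum ℂ S) :=
        continuousOn_id.mul (hcont g)
      have e1 : S * cfc (affilExt g) S = cfc (fun s : ℂ => s * affilExt g s) S := by
        rw [cfc_mul (fun s : ℂ => s) (affilExt g) S continuousOn_id (hcont g), cfc_id' ℂ S]
      rw [e1, ← cfc_smul (Complex.I - z) (fun s : ℂ => s * affilExt g s) S hmulcont,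
        ← cfc_add S (affilExt g) (fun x => (Complex.I - z) • (x * affilExt g x)) (hcont g) (hmulcont.const_smul (Complex.I - z) :)]
      have heqon : (spectrum ℂ S).EqOn
          (fun s : ℂ => affilExt g s + (Complex.I - z) • (s * affilExt g s)) (id : ℂ → ℂ) := by
        intro s hs
        show affilExt g s + (Complex.I - z) • (s * affilExt g s) = s
        by_cases h0 : s = 0
        · simp [h0]
        · have hsK := hspec hs
          have hparam := affil_param hsK h0
          simp only [affilExt, if_neg h0]
          rw [hg (s⁻¹.re), smul_eq_mul]
          set t : ℝ := s⁻¹.re with htdef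
          have ht : ((t : ℝ) : ℂ) - z ≠ 0 := by
            intro hcon
            apply hz
            have := congrArg Complex.im hcon
            simpa using this.symm
          have htI : ((t : ℝ) : ℂ) - Complex.I ≠ 0 := affil_sub_I_ne t
          rw [hparam]
          field_simp
          ring
      rw [cfc_congr heqon, cfc_id ℂ S]
    -- now the algebraic uniqueness
    set A := cfc (affilExt g) S with hAdef
    have key1 : A - Φ z + (Complex.I - z) • (S * (A - Φ z)) = 0 := by
      have e : A - Φ z + (Complex.I - z) • (S * (A - Φ z))
          = (A + (Complex.I - z) • (S * A)) - (Φ z + (Complex.I - z) • (S * Φ z)) := by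
        rw [mul_sub, smul_sub]
        abel
      rw [e, hA1, h1, sub_self]
    have hSD : S * (A - Φ z) = 0 := by
      have h3 : Φ z * (A - Φ z + (Complex.I - z) • (S * (A - Φ z))) = 0 := by
        rw [key1, mul_zero]
      calc S * (A - Φ z) = (Φ z + (Complex.I - z) • (Φ z * S)) * (A - Φ z) := by rw [h2]
        _ = Φ z * (A - Φ z + (Complex.I - z) • (S * (A - Φ z))) := by
            rw [add_mul, smul_mul_assoc, mul_add, mul_smul_comm, mul_assoc]
        _ = 0 := h3
    have hD0 : A - Φ z = 0 := by
      have := key1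
      rwa [hSD, smul_zero, add_zero] at this
    exact sub_eq_zero.mp hD0
  refine ⟨F, hP, ?_⟩
  intro F' hF'
  have hcF : Continuous F :=
    AddMonoidHomClass.continuous_of_bound F 1
      (fun g => by simpa using NonUnitalStarAlgHom.norm_apply_le F g)
  have hcF' : Continuous F' :=
    AddMonoidHomClass.continuous_of_bound F' 1
      (fun g => by simpa using NonUnitalStarAlgHom.norm_apply_le F' g)
  have hcθ : Continuous affilTheta :=
    AddMonoidHomClass.continuous_of_bound affilTheta 1
      (fun f => by simpa using NonUnitalStarAlgHom.norm_apply_le affilTheta f)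
  have h0K : ((0 : affilK) : ℂ) = 0 := rfl
  have hG : F'.comp affilTheta = F.comp affilTheta := by
    haveI : Fact ((0 : ℂ) ∈ affilK) := ⟨affilK_zero_mem⟩
    have hd := ContinuousMapZero.adjoin_id_dense (𝕜 := ℂ) affilK
    rw [DFunLike.ext'_iff, ← Set.eqOn_univ, ← hd.closure_eq]
    refine Set.EqOn.closure (fun f hf => ?_) (hcF'.comp hcθ) (hcF.comp hcθ)
    rw [← NonUnitalStarAlgHom.mem_equalizer]
    refine NonUnitalStarAlgebra.adjoin_le ?_ hf
    rw [Set.singleton_subset_iff, SetLike.mem_coe, NonUnitalStarAlgHom.mem_equalizer]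
    show F' (affilTheta (ContinuousMapZero.id affilK)) = F (affilTheta (ContinuousMapZero.id affilK))
    have hid : ∀ t : ℝ, (affilTheta (ContinuousMapZero.id affilK)) t = ((t:ℂ) - Complex.I)⁻¹ :=
      fun t => by rw [affilTheta_apply]; rfl
    rw [hF' Complex.I hI _ hid, hP Complex.I hI _ hid]
  ext g
  obtain ⟨f, hf⟩ := affilTheta_surj g
  calc F' g = (F'.comp affilTheta) f := by rw [← hf]; rfl
    _ = (F.comp affilTheta) f := by rw [hG]
    _ = F g := by rw [NonUnitalStarAlgHom.comp_apply, hf]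

end
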